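/- (Vigier) Let {A_n} be a sequence of bounded self-adjoint operators on a Hilbert space H such that for every unit vector u the sequence ⟨A_n u, u⟩ is increasing and bounded above uniformly (there is M with ⟨A_n u, u⟩ ≤ M for all n and ‖u‖=1). Then {A_n} converges strongly to some bounded self-adjoint operator A. -/

import Mathlib

open scoped RealInnerProductSpace


lemma aux_cs10 {H : Type*} [NormedAddCommGroup H] [InnerProductSpace ℝ H]
    (B : H →L[ℝ] H) (hsym : ∀ u v : H, ⟪B u, v⟫ = ⟪u, B v⟫)
    (hpos : ∀ u : H, 0 ≤ ⟪B u, u⟫) (K : ℝ) (hK : ∀ u : H, ⟪B u, u⟫ ≤ K * ‖u‖ ^ 2)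
    (u : H) : ‖B u‖ ^ 2 ≤ K * ⟪B u, u⟫ := by
  have cs : ∀ v : H, ⟪B u, v⟫ ^ 2 ≤ ⟪B u, u⟫ * ⟪B v, v⟫ := by
    intro v
    have hcomm : ⟪B v, u⟫ = ⟪B u, v⟫ := by
      rw [hsym v u, real_inner_comm]
    have h : ∀ t : ℝ, 0 ≤ ⟪B v, v⟫ * (t * t) + (2 * ⟪B u, v⟫) * t + ⟪B u, u⟫ := by
      intro t
      have h0 := hpos (u + t • v)
      have hexp : ⟪B (u + t • v), u + t • v⟫
          = ⟪B v, v⟫ * (t * t) + (2 * ⟪B u, v⟫) * t + ⟪B u, u⟫ := by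
        simp only [map_add, map_smul, inner_add_left, inner_add_right,
          real_inner_smul_left, real_inner_smul_right, hcomm]
        ring
      linarith [hexp ▸ h0]
    have hd := discrim_le_zero h
    rw [discrim] at hd
    nlinarith
  have h1 := cs (B u)
  have h2 := hK (B u)
  have h3 := hpos u
  have h4 := hpos (B u)
  have hn : ⟪B u, B u⟫ = ‖B u‖ ^ 2 := real_inner_self_eq_norm_sq (B u)
  rw [hn] at h1
  rcases eq_or_lt_of_le (norm_nonneg (B u)) with h0 | h0
  · have hz : B u = 0 := norm_eq_zero.mp h0.symm
    simp [hz]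
  · nlinarith [mul_le_mul_of_nonneg_left h2 h3, mul_pos h0 h0]


/-- Vigier's theorem: a sequence of bounded self-adjoint operators whose quadratic
forms are increasing and uniformly bounded above converges strongly to a bounded
self-adjoint operator. -/
theorem stmt_10 {H : Type*} [NormedAddCommGroup H] [InnerProductSpace ℝ H] [CompleteSpace H]
    (A : ℕ → H →L[ℝ] H)
    (hsa : ∀ n, ∀ u v : H, ⟪A n u, v⟫ = ⟪u, A n v⟫)
    (hincr : ∀ n, ∀ u : H, ⟪A n u, u⟫ ≤ ⟪A (n + 1) u, u⟫)
    (hbdd : ∃ M : ℝ, ∀ n, ∀ u : H, ‖u‖ = 1 → ⟪A n u, u⟫ ≤ M) :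
    ∃ T : H →L[ℝ] H, (∀ u v : H, ⟪T u, v⟫ = ⟪u, T v⟫) ∧
      ∀ u : H, Filter.Tendsto (fun n => A n u) Filter.atTop (nhds (T u)) := by
  obtain ⟨M, hM⟩ := hbdd
  set C : ℝ := max M ‖A 0‖ with hCdef
  have hC0 : (0:ℝ) ≤ C := le_max_of_le_right (norm_nonneg _)
  have qmono : ∀ u : H, Monotone fun n => ⟪A n u, u⟫ := fun u =>
    monotone_nat_of_le_succ fun n => hincr n u
  have qub : ∀ n (u : H), ⟪A n u, u⟫ ≤ C * ‖u‖ ^ 2 := by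
    intro n u
    rcases eq_or_ne u 0 with rfl | hu
    · simp
    · have hnu : ‖u‖ ≠ 0 := norm_ne_zero_iff.mpr hu
      have hpos : (0:ℝ) < ‖u‖ := lt_of_le_of_ne (norm_nonneg u) (Ne.symm hnu)
      have h1 : ‖(‖u‖⁻¹ : ℝ) • u‖ = 1 := by
        rw [norm_smul, norm_inv, norm_norm, inv_mul_cancel₀ hnu]
      have h2 := hM n ((‖u‖⁻¹ : ℝ) • u) h1
      rw [map_smul, real_inner_smul_left, real_inner_smul_right] at h2
      have key := mul_le_mul_of_nonneg_left h2 (sq_nonneg ‖u‖)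
      have hid : ‖u‖ ^ 2 * (‖u‖⁻¹ * (‖u‖⁻¹ * ⟪A n u, u⟫)) = ⟪A n u, u⟫ := by
        field_simp
      rw [hid] at key
      have hMC : M * ‖u‖ ^ 2 ≤ C * ‖u‖ ^ 2 :=
        mul_le_mul_of_nonneg_right (le_max_left _ _) (sq_nonneg _)
      nlinarith
  have qlb : ∀ n (u : H), -(C * ‖u‖ ^ 2) ≤ ⟪A n u, u⟫ := by
    intro n u
    have h0 : |⟪A 0 u, u⟫| ≤ ‖A 0‖ * ‖u‖ ^ 2 := by
      calc |⟪A 0 u, u⟫| ≤ ‖A 0 u‖ * ‖u‖ := abs_real_inner_le_norm _ _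
        _ ≤ ‖A 0‖ * ‖u‖ * ‖u‖ := by
            exact mul_le_mul_of_nonneg_right ((A 0).le_opNorm u) (norm_nonneg u)
        _ = ‖A 0‖ * ‖u‖ ^ 2 := by ring
    have hm := qmono u (Nat.zero_le n)
    have hAC : ‖A 0‖ * ‖u‖ ^ 2 ≤ C * ‖u‖ ^ 2 :=
      mul_le_mul_of_nonneg_right (le_max_right _ _) (sq_nonneg _)
    have := abs_le.mp h0
    simp only at hm
    linarith [this.1]
  -- uniform norm bound
  have hAn : ∀ n (u : H), ‖A n u‖ ≤ 3 * C * ‖u‖ := by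
    intro n u
    set P : H →L[ℝ] H := C • ContinuousLinearMap.id ℝ H - A n with hP
    have hPapp : ∀ w : H, P w = C • w - A n w := fun w => rfl
    have hPsym : ∀ w v : H, ⟪P w, v⟫ = ⟪w, P v⟫ := by
      intro w v
      simp only [hPapp, inner_sub_left, inner_sub_right, real_inner_smul_left,
        real_inner_smul_right, hsa n w v]
    have hPq : ∀ w : H, ⟪P w, w⟫ = C * ‖w‖ ^ 2 - ⟪A n w, w⟫ := by
      intro w
      simp only [hPapp, inner_sub_left, real_inner_smul_left,
        real_inner_self_eq_norm_sq]
      try ring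
    have hPpos : ∀ w : H, 0 ≤ ⟪P w, w⟫ := by
      intro w; rw [hPq]; linarith [qub n w]
    have hPub : ∀ w : H, ⟪P w, w⟫ ≤ 2 * C * ‖w‖ ^ 2 := by
      intro w; rw [hPq]; linarith [qlb n w]
    have hkey := aux_cs10 P hPsym hPpos (2 * C) hPub u
    have h1 : ‖P u‖ ^ 2 ≤ (2 * C * ‖u‖) ^ 2 := by
      calc ‖P u‖ ^ 2 ≤ 2 * C * ⟪P u, u⟫ := hkey
        _ ≤ 2 * C * (2 * C * ‖u‖ ^ 2) := by
            exact mul_le_mul_of_nonneg_left (hPub u) (by linarith)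
        _ = (2 * C * ‖u‖) ^ 2 := by ring
    have h2 : ‖P u‖ ≤ 2 * C * ‖u‖ := by
      have h3 : (0:ℝ) ≤ 2 * C * ‖u‖ := by positivity
      nlinarith [norm_nonneg (P u)]
    have h4 : A n u = C • u - P u := by rw [hPapp]; abel
    calc ‖A n u‖ = ‖C • u - P u‖ := by rw [← h4]
      _ ≤ ‖C • u‖ + ‖P u‖ := norm_sub_le _ _
      _ ≤ C * ‖u‖ + 2 * C * ‖u‖ := by
          rw [norm_smul, Real.norm_eq_abs, abs_of_nonneg hC0]
          linarith
      _ = 3 * C * ‖u‖ := by ring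
  -- Cauchy estimate
  have est : ∀ (u : H) (n m : ℕ), n ≤ m →
      ‖A m u - A n u‖ ^ 2 ≤ 2 * C * (⟪A m u, u⟫ - ⟪A n u, u⟫) := by
    intro u n m hnm
    set B : H →L[ℝ] H := A m - A n with hB
    have hBapp : ∀ w : H, B w = A m w - A n w := fun w => rfl
    have hBsym : ∀ w v : H, ⟪B w, v⟫ = ⟪w, B v⟫ := by
      intro w v
      simp only [hBapp, inner_sub_left, inner_sub_right, hsa m w v, hsa n w v]
    have hBq : ∀ w : H, ⟪B w, w⟫ = ⟪A m w, w⟫ - ⟪A n w, w⟫ := by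
      intro w; simp only [hBapp, inner_sub_left]
    have hBpos : ∀ w : H, 0 ≤ ⟪B w, w⟫ := by
      intro w; rw [hBq]; have := qmono w hnm; simp only at this; linarith
    have hBub : ∀ w : H, ⟪B w, w⟫ ≤ 2 * C * ‖w‖ ^ 2 := by
      intro w; rw [hBq]; linarith [qub m w, qlb n w]
    have := aux_cs10 B hBsym hBpos (2 * C) hBub u
    simpa [hBapp, inner_sub_left] using this
  -- limits of quadratic forms
  have qlim : ∀ u : H, ∃ L : ℝ, Filter.Tendsto (fun n => ⟪A n u, u⟫)
      Filter.atTop (nhds L) ∧ ∀ n, ⟪A n u, u⟫ ≤ L := by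
    intro u
    have hb : BddAbove (Set.range fun n => ⟪A n u, u⟫) := by
      refine ⟨C * ‖u‖ ^ 2, ?_⟩
      rintro x ⟨n, rfl⟩
      exact qub n u
    exact ⟨_, tendsto_atTop_ciSup (qmono u) hb, fun n => le_ciSup hb n⟩
  choose L hLt hLle using qlim
  have cauchy : ∀ u : H, CauchySeq fun n => A n u := by
    intro u
    apply cauchySeq_of_le_tendsto_0
      (b := fun N => Real.sqrt (2 * C * (L u - ⟪A N u, u⟫)))
    · intro n m N hn hm
      have key : ∀ a b : ℕ, N ≤ a → a ≤ b →
          dist (A a u) (A b u) ≤ Real.sqrt (2 * C * (L u - ⟪A N u, u⟫)) := by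
        intro a b hNa hab
        have h1 : ‖A b u - A a u‖ ^ 2 ≤ 2 * C * (⟪A b u, u⟫ - ⟪A a u, u⟫) :=
          est u a b hab
        have h2 : ⟪A b u, u⟫ ≤ L u := hLle u b
        have h3 : ⟪A N u, u⟫ ≤ ⟪A a u, u⟫ := qmono u hNa
        have h4 : ‖A b u - A a u‖ ^ 2 ≤ 2 * C * (L u - ⟪A N u, u⟫) := by
          nlinarith
        have h5 : dist (A a u) (A b u) = ‖A b u - A a u‖ := by
          rw [dist_eq_norm, norm_sub_rev]
        rw [h5]
        calc ‖A b u - A a u‖ = Real.sqrt (‖A b u - A a u‖ ^ 2) := by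
              rw [Real.sqrt_sq (norm_nonneg _)]
          _ ≤ Real.sqrt (2 * C * (L u - ⟪A N u, u⟫)) := Real.sqrt_le_sqrt h4
      rcases le_total n m with hnm | hmn
      · exact key n m hn hnm
      · rw [dist_comm]; exact key m n hm hmn
    · have h1 : Filter.Tendsto (fun N => 2 * C * (L u - ⟪A N u, u⟫))
          Filter.atTop (nhds 0) := by
        have := ((tendsto_const_nhds (x := L u) (f := Filter.atTop (α := ℕ))).sub (hLt u)).const_mul (2 * C)
        simpa using this
      have h2 := (Real.continuous_sqrt.tendsto 0).comp h1
      simpa [Function.comp_def] using h2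
  have conv : ∀ u : H, ∃ y : H, Filter.Tendsto (fun n => A n u)
      Filter.atTop (nhds y) := fun u => cauchySeq_tendsto_of_complete (cauchy u)
  choose T0 hT0 using conv
  have hadd : ∀ u v : H, T0 (u + v) = T0 u + T0 v := by
    intro u v
    refine tendsto_nhds_unique (hT0 (u + v)) ?_
    have := (hT0 u).add (hT0 v)
    simpa using this
  have hsmul : ∀ (c : ℝ) (u : H), T0 (c • u) = c • T0 u := by
    intro c u
    refine tendsto_nhds_unique (hT0 (c • u)) ?_
    have := (hT0 u).const_smul c
    simpa using this
  let Tlin : H →ₗ[ℝ] H :=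
    { toFun := T0
      map_add' := hadd
      map_smul' := hsmul }
  have hbound : ∀ u : H, ‖Tlin u‖ ≤ 3 * C * ‖u‖ := by
    intro u
    exact le_of_tendsto (hT0 u).norm (Filter.Eventually.of_forall fun n => hAn n u)
  refine ⟨Tlin.mkContinuous (3 * C) hbound, ?_, ?_⟩
  · intro u v
    have h1 : Filter.Tendsto (fun n => ⟪A n u, v⟫) Filter.atTop (nhds ⟪T0 u, v⟫) :=
      (hT0 u).inner tendsto_const_nhds
    have h2 : Filter.Tendsto (fun n => ⟪A n u, v⟫) Filter.atTop (nhds ⟪u, T0 v⟫) := by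
      simp only [hsa]
      exact tendsto_const_nhds.inner (hT0 v)
    exact tendsto_nhds_unique h1 h2
  · intro u
    exact hT0 u
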